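/- Let G be a subgroup of the piecewise-linear orientation-preserving homeomorphisms of [0,1]. If supt G' = supt G, then the second derived subgroup G'' equals the third derived subgroup G''', i.e. G'' is perfect; moreover supt G'' = supt G. -/

import Mathlib

open Set

def IsPL (f : Equiv.Perm (Icc (0:ℝ) 1)) : Prop :=
  ∃ (n : ℕ) (t : Fin (n + 2) → ℝ), StrictMono t ∧ t 0 = 0 ∧ t (Fin.last (n + 1)) = 1 ∧
    ∀ i : Fin (n + 1), ∃ a b : ℝ, ∀ x : Icc (0:ℝ) 1,
      (x : ℝ) ∈ Icc (t i.castSucc) (t i.succ) → (f x : ℝ) = a * (x : ℝ) + b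

namespace S3

open scoped commutatorElement

lemma Equiv.Perm.inv_apply_self {α : Type*} (f : Equiv.Perm α) (x : α) : f⁻¹ (f x) = x :=
  f.symm_apply_apply x

lemma Equiv.Perm.apply_inv_self {α : Type*} (f : Equiv.Perm α) (x : α) : f (f⁻¹ x) = x :=
  f.apply_symm_apply x


abbrev XX : Type := ↥(Icc (0:ℝ) 1)
abbrev PP : Type := Equiv.Perm XX

lemma coe_le {y z : XX} : y ≤ z ↔ (y:ℝ) ≤ (z:ℝ) := Iff.rfl
lemma coe_lt {y z : XX} : y < z ↔ (y:ℝ) < (z:ℝ) := Subtype.coe_lt_coe.symm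

variable {G : Subgroup PP}

/-- Niceness of a single permutation. -/
def Nice (g : PP) : Prop := Continuous (⇑g) ∧ Monotone (⇑g) ∧ IsPL g

lemma Nice.smono {g : PP} (h : Nice g) : StrictMono (⇑g) :=
  h.2.1.strictMono_of_injective g.injective

lemma smono_of (hG : ∀ g ∈ G, Nice g) {g : PP} (hg : g ∈ G) : StrictMono (⇑g) :=
  (hG g hg).smono



variable {G : Subgroup PP}

def botX : XX := ⟨0, by norm_num⟩
def topX : XX := ⟨1, by norm_num⟩

lemma botX_le (y : XX) : botX ≤ y := y.2.1
lemma le_topX (y : XX) : y ≤ topX := y.2.2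

lemma fix_botX {g : PP} (hm : Monotone (⇑g)) : g botX = botX := by
  refine le_antisymm ?_ (botX_le _)
  have h1 : g botX ≤ g (g.symm botX) := hm (botX_le _)
  rwa [Equiv.apply_symm_apply] at h1

lemma fix_topX {g : PP} (hm : Monotone (⇑g)) : g topX = topX := by
  refine le_antisymm (le_topX _) ?_
  have h1 : g (g.symm topX) ≤ g topX := hm (le_topX _)
  rwa [Equiv.apply_symm_apply] at h1

/-- The set of reals in `[0,1]` fixed (as subtype points) by every element of `G`. -/
def FixR (G : Subgroup PP) : Set ℝ :=
  {c | c ∈ Icc (0:ℝ) 1 ∧ ∀ g ∈ G, ∀ y : XX, (y:ℝ) = c → g y = y}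

lemma FixR_mem_Icc {c : ℝ} (hc : c ∈ FixR G) : c ∈ Icc (0:ℝ) 1 := hc.1

lemma FixR_fix {c : ℝ} (hc : c ∈ FixR G) {g : PP} (hg : g ∈ G) {y : XX}
    (hy : (y:ℝ) = c) : g y = y := hc.2 g hg y hy

lemma zero_mem_FixR (hG : ∀ g ∈ G, Nice g) : (0:ℝ) ∈ FixR G := by
  refine ⟨by norm_num, fun g hg y hy => ?_⟩
  have : y = botX := Subtype.ext (by simpa [botX] using hy)
  rw [this, fix_botX (hG g hg).2.1]

lemma one_mem_FixR (hG : ∀ g ∈ G, Nice g) : (1:ℝ) ∈ FixR G := by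
  refine ⟨by norm_num, fun g hg y hy => ?_⟩
  have : y = topX := Subtype.ext (by simpa [topX] using hy)
  rw [this, fix_topX (hG g hg).2.1]

lemma FixR_eq_image (G : Subgroup PP) :
    FixR G = Subtype.val '' {y : XX | ∀ g ∈ G, g y = y} := by
  ext c
  constructor
  · rintro ⟨hc1, hc2⟩
    exact ⟨⟨c, hc1⟩, fun g hg => hc2 g hg _ rfl, rfl⟩
  · rintro ⟨y, hy, rfl⟩
    exact ⟨y.2, fun g hg z hz => by rw [Subtype.ext hz]; exact hy g hg⟩

lemma FixR_closed (hG : ∀ g ∈ G, Nice g) : IsClosed (FixR G) := by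
  rw [FixR_eq_image]
  have hcl : IsClosed {y : XX | ∀ g ∈ G, g y = y} := by
    have : {y : XX | ∀ g ∈ G, g y = y} = ⋂ (g : PP) (_ : g ∈ G), {y : XX | g y = y} := by
      ext y; simp [Set.mem_iInter]
    rw [this]
    refine isClosed_iInter fun g => isClosed_iInter fun hg =>
      isClosed_eq (hG g hg).1 continuous_id
  have hcomp : IsCompact {y : XX | ∀ g ∈ G, g y = y} := hcl.isCompact
  exact (hcomp.image continuous_subtype_val).isClosed

/-- orbital: maximal fixed-point-free interval with fixed endpoints -/
def IsOrb (G : Subgroup PP) (a b : ℝ) : Prop :=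
  a ∈ FixR G ∧ b ∈ FixR G ∧ a < b ∧ Ioo a b ∩ FixR G = ∅

lemma IsOrb.notFix {a b : ℝ} (h : IsOrb G a b) {c : ℝ} (h1 : a < c) (h2 : c < b) :
    c ∉ FixR G := fun hc => by
  have : c ∈ Ioo a b ∩ FixR G := ⟨⟨h1, h2⟩, hc⟩
  rw [h.2.2.2] at this; exact this

lemma IsOrb.unique {a b a' b' c : ℝ} (h : IsOrb G a b) (h' : IsOrb G a' b')
    (h1 : a < c) (h2 : c < b) (h1' : a' < c) (h2' : c < b') : a = a' ∧ b = b' := by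
  constructor
  · rcases lt_trichotomy a a' with hlt | heq | hgt
    · exact absurd h'.1 (h.notFix hlt (lt_trans h1' h2))
    · exact heq
    · exact absurd h.1 (h'.notFix hgt (lt_trans h1 h2'))
  · rcases lt_trichotomy b b' with hlt | heq | hgt
    · exact absurd h.2.1 (h'.notFix (lt_trans h1' h2) hlt)
    · exact heq
    · exact absurd h'.2.1 (h.notFix (lt_trans h1 h2') hgt)

/-- Every non-fixed point lies in an orbital. -/
lemma exists_orbital (hG : ∀ g ∈ G, Nice g) {x : XX} (hx : ∃ g ∈ G, g x ≠ x) :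
    ∃ a b : ℝ, IsOrb G a b ∧ a < (x:ℝ) ∧ (x:ℝ) < b := by
  have hxF : (x:ℝ) ∉ FixR G := by
    rintro ⟨h1, h2⟩
    obtain ⟨g, hg, hgx⟩ := hx
    exact hgx (h2 g hg x rfl)
  set Sm : Set ℝ := FixR G ∩ Iic (x:ℝ) with hSm
  set Sp : Set ℝ := FixR G ∩ Ici (x:ℝ) with hSp
  have hSmne : Sm.Nonempty := ⟨0, zero_mem_FixR hG, x.2.1⟩
  have hSpne : Sp.Nonempty := ⟨1, one_mem_FixR hG, x.2.2⟩
  have hSmbdd : BddAbove Sm := ⟨(x:ℝ), fun z hz => hz.2⟩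
  have hSpbdd : BddBelow Sp := ⟨(x:ℝ), fun z hz => hz.2⟩
  have hSmcl : IsClosed Sm := (FixR_closed hG).inter isClosed_Iic
  have hSpcl : IsClosed Sp := (FixR_closed hG).inter isClosed_Ici
  set a := sSup Sm
  set b := sInf Sp
  have haS : a ∈ Sm := hSmcl.csSup_mem hSmne hSmbdd
  have hbS : b ∈ Sp := hSpcl.csInf_mem hSpne hSpbdd
  have hax : a < (x:ℝ) := lt_of_le_of_ne haS.2 (fun h => hxF (h ▸ haS.1))
  have hxb : (x:ℝ) < b := lt_of_le_of_ne hbS.2 (fun h => hxF (h ▸ hbS.1))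
  refine ⟨a, b, ⟨haS.1, hbS.1, lt_trans hax hxb, ?_⟩, hax, hxb⟩
  ext c
  simp only [Set.mem_inter_iff, Set.mem_Ioo, Set.mem_empty_iff_false, iff_false, not_and]
  rintro ⟨hac, hcb⟩ hcF
  rcases le_or_gt c (x:ℝ) with hcx | hxc
  · exact absurd (le_csSup hSmbdd ⟨hcF, hcx⟩) (not_le.mpr hac)
  · exact absurd (csInf_le hSpbdd ⟨hcF, hxc.le⟩) (not_le.mpr hcb)



/-- find the piece containing c from the right -/
lemma fin_find_right {n : ℕ} {t : Fin (n+2) → ℝ} (hm : StrictMono t) (h0 : t 0 = 0)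
    (h1 : t (Fin.last (n+1)) = 1) {c : ℝ} (hc0 : 0 ≤ c) (hc1 : c < 1) :
    ∃ i : Fin (n+1), t i.castSucc ≤ c ∧ c < t i.succ := by
  classical
  set S : Finset (Fin (n+1)) := Finset.univ.filter (fun j => t j.castSucc ≤ c) with hS
  have hSne : S.Nonempty := by
    refine ⟨0, ?_⟩
    simp only [hS, Finset.mem_filter, Finset.mem_univ, true_and]
    have : (0 : Fin (n+1)).castSucc = (0 : Fin (n+2)) := rfl
    rw [this, h0]; exact hc0
  set i := S.max' hSne with hi
  have hiS : i ∈ S := S.max'_mem hSne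
  have hile : t i.castSucc ≤ c := by
    simp only [hS, Finset.mem_filter] at hiS; exact hiS.2
  refine ⟨i, hile, ?_⟩
  by_contra hcon
  push_neg at hcon
  by_cases hlast : i = Fin.last n
  · rw [hlast] at hcon
    have hls : (Fin.last n).succ = Fin.last (n+1) := rfl
    rw [hls, h1] at hcon
    exact absurd hcon (not_le.mpr hc1)
  · have hlt : (i:ℕ) < n := lt_of_le_of_ne (Nat.lt_succ_iff.mp i.2) (fun h => hlast (Fin.ext h))
    have hkey : ((i+1 : Fin (n+1))).castSucc = i.succ := by
      apply Fin.ext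
      simp only [Fin.coe_castSucc, Fin.val_succ]
      have : ((i+1 : Fin (n+1)) : ℕ) = (i:ℕ) + 1 := by
        rw [Fin.val_add_one]
        simp [hlast]
      rw [this]
    have hmem : (i+1 : Fin (n+1)) ∈ S := by
      simp only [hS, Finset.mem_filter, Finset.mem_univ, true_and]
      rw [hkey]; exact hcon
    have hle := S.le_max' _ hmem
    rw [← hi] at hle
    have : i < i + 1 := by
      rw [Fin.lt_iff_val_lt_val]
      have : ((i+1 : Fin (n+1)) : ℕ) = (i:ℕ) + 1 := by
        rw [Fin.val_add_one]; simp [hlast]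
      rw [this]; omega
    exact absurd hle (not_le.mpr this)

lemma fin_find_left {n : ℕ} {t : Fin (n+2) → ℝ} (hm : StrictMono t) (h0 : t 0 = 0)
    (h1 : t (Fin.last (n+1)) = 1) {c : ℝ} (hc0 : 0 < c) (hc1 : c ≤ 1) :
    ∃ i : Fin (n+1), t i.castSucc < c ∧ c ≤ t i.succ := by
  classical
  set S : Finset (Fin (n+1)) := Finset.univ.filter (fun j => t j.castSucc < c) with hS
  have hSne : S.Nonempty := by
    refine ⟨0, ?_⟩
    simp only [hS, Finset.mem_filter, Finset.mem_univ, true_and]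
    have : (0 : Fin (n+1)).castSucc = (0 : Fin (n+2)) := rfl
    rw [this, h0]; exact hc0
  set i := S.max' hSne with hi
  have hiS : i ∈ S := S.max'_mem hSne
  have hile : t i.castSucc < c := by
    simp only [hS, Finset.mem_filter] at hiS; exact hiS.2
  refine ⟨i, hile, ?_⟩
  by_contra hcon
  push_neg at hcon
  by_cases hlast : i = Fin.last n
  · rw [hlast] at hcon
    have hls : (Fin.last n).succ = Fin.last (n+1) := rfl
    rw [hls, h1] at hcon
    exact absurd hcon (not_lt.mpr hc1)
  · have hkey : ((i+1 : Fin (n+1))).castSucc = i.succ := by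
      apply Fin.ext
      simp only [Fin.coe_castSucc, Fin.val_succ]
      rw [Fin.val_add_one]; simp [hlast]
    have hmem : (i+1 : Fin (n+1)) ∈ S := by
      simp only [hS, Finset.mem_filter, Finset.mem_univ, true_and]
      rw [hkey]; exact hcon
    have hle := S.le_max' _ hmem
    rw [← hi] at hle
    have : i < i + 1 := by
      rw [Fin.lt_iff_val_lt_val]
      have : ((i+1 : Fin (n+1)) : ℕ) = (i:ℕ) + 1 := by
        rw [Fin.val_add_one]; simp [hlast]
      rw [this]; omega
    exact absurd hle (not_le.mpr this)



/-- right affine germ at c with slope σ -/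
def AffG (c : ℝ) (f : PP) (σ : ℝ) : Prop :=
  0 < σ ∧ ∃ ε > 0, ∀ y : XX, c ≤ (y:ℝ) → (y:ℝ) ≤ c + ε → ((f y : ℝ)) = c + σ * ((y:ℝ) - c)

def AffGL (c : ℝ) (f : PP) (σ : ℝ) : Prop :=
  0 < σ ∧ ∃ ε > 0, ∀ y : XX, c - ε ≤ (y:ℝ) → (y:ℝ) ≤ c → ((f y : ℝ)) = c + σ * ((y:ℝ) - c)

lemma AffG.mul {c : ℝ} {f f' : PP} {σ σ' : ℝ} (h : AffG c f σ) (h' : AffG c f' σ') :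
    AffG c (f * f') (σ * σ') := by
  obtain ⟨hσ, ε, hε, hf⟩ := h
  obtain ⟨hσ', ε', hε', hf'⟩ := h'
  refine ⟨mul_pos hσ hσ', min ε' (ε / σ'), lt_min hε' (div_pos hε hσ'), fun y hy1 hy2 => ?_⟩
  have key : ((f' y : ℝ)) = c + σ' * ((y:ℝ) - c) :=
    hf' y hy1 (le_trans hy2 (by simp [min_le_left]))
  have h1 : c ≤ ((f' y : ℝ)) := by nlinarith [hσ'.le]
  have h2 : ((f' y : ℝ)) ≤ c + ε := by
    have : (y:ℝ) - c ≤ ε / σ' := by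
      have := le_trans hy2 (add_le_add_right (min_le_right ε' (ε/σ')) c); linarith
    have : σ' * ((y:ℝ) - c) ≤ ε := by
      rw [← le_div_iff₀' hσ']; exact this
    linarith [key]
  have := hf (f' y) h1 h2
  rw [Equiv.Perm.mul_apply, this, key]
  ring

lemma AffGL.mul {c : ℝ} {f f' : PP} {σ σ' : ℝ} (h : AffGL c f σ) (h' : AffGL c f' σ') :
    AffGL c (f * f') (σ * σ') := by
  obtain ⟨hσ, ε, hε, hf⟩ := h
  obtain ⟨hσ', ε', hε', hf'⟩ := h'
  refine ⟨mul_pos hσ hσ', min ε' (ε / σ'), lt_min hε' (div_pos hε hσ'), fun y hy1 hy2 => ?_⟩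
  have key : ((f' y : ℝ)) = c + σ' * ((y:ℝ) - c) :=
    hf' y (le_trans (by have := min_le_left ε' (ε/σ'); linarith) hy1) hy2
  have h1 : ((f' y : ℝ)) ≤ c := by nlinarith [hσ'.le]
  have h2 : c - ε ≤ ((f' y : ℝ)) := by
    have hd : c - (y:ℝ) ≤ ε / σ' := by
      have := le_trans (sub_le_sub_left (min_le_right ε' (ε/σ')) c) hy1; linarith
    have : σ' * (c - (y:ℝ)) ≤ ε := by rw [← le_div_iff₀' hσ']; exact hd
    linarith [key]
  have := hf (f' y) h2 h1
  rw [Equiv.Perm.mul_apply, this, key]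
  ring

lemma AffG.one {c : ℝ} : AffG c 1 1 :=
  ⟨one_pos, 1, one_pos, fun y _ _ => by simp⟩

lemma AffGL.one {c : ℝ} : AffGL c 1 1 :=
  ⟨one_pos, 1, one_pos, fun y _ _ => by simp⟩

lemma AffG.unique {c : ℝ} {f : PP} {σ σ' : ℝ} (hc0 : 0 ≤ c) (hc1 : c < 1)
    (h : AffG c f σ) (h' : AffG c f σ') : σ = σ' := by
  obtain ⟨hσ, ε, hε, hf⟩ := h
  obtain ⟨hσ', ε', hε', hf'⟩ := h'
  set v := min (c + min ε ε') ((c+1)/2) with hv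
  have hvc : c < v := by
    apply lt_min (by simp [lt_min hε hε']) (by linarith)
  have hv1 : v ≤ 1 := le_trans (min_le_right _ _) (by linarith)
  have hv0 : 0 ≤ v := le_trans hc0 hvc.le
  set y : XX := ⟨v, hv0, hv1⟩ with hy
  have e1 := hf y hvc.le (le_trans (min_le_left _ _) (by simp [min_le_left]))
  have e2 := hf' y hvc.le (le_trans (min_le_left _ _) (by simp [min_le_right]))
  have : σ * (v - c) = σ' * (v - c) := by rw [e1] at e2; linarith
  have hne : v - c ≠ 0 := by linarith
  rw [mul_eq_mul_right_iff] at this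
  rcases this with h | h
  · exact h
  · exact absurd h hne

lemma AffGL.unique {c : ℝ} {f : PP} {σ σ' : ℝ} (hc0 : 0 < c) (hc1 : c ≤ 1)
    (h : AffGL c f σ) (h' : AffGL c f σ') : σ = σ' := by
  obtain ⟨hσ, ε, hε, hf⟩ := h
  obtain ⟨hσ', ε', hε', hf'⟩ := h'
  set v := max (c - min ε ε') (c/2) with hv
  have hvc : v < c := by
    apply max_lt (by simp [lt_min hε hε']) (by linarith)
  have hv0 : 0 ≤ v := le_trans (by linarith) (le_max_right _ _)
  have hv1 : v ≤ 1 := le_trans hvc.le hc1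
  set y : XX := ⟨v, hv0, hv1⟩ with hy
  have e1 := hf y (by exact le_trans (sub_le_sub_left (min_le_left _ _) c) (le_max_left _ _)) hvc.le
  have e2 := hf' y (by exact le_trans (sub_le_sub_left (min_le_right _ _) c) (le_max_left _ _)) hvc.le
  have : σ * (v - c) = σ' * (v - c) := by rw [e1] at e2; linarith
  have hne : v - c ≠ 0 := by linarith
  rw [mul_eq_mul_right_iff] at this
  rcases this with h | h
  · exact h
  · exact absurd h hne


lemma exists_AffG (hG : ∀ g ∈ G, Nice g) {g : PP} (hg : g ∈ G) {c : ℝ}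
    (hc : c ∈ FixR G) (hc1 : c < 1) : ∃ σ : ℝ, AffG c g σ := by
  obtain ⟨n, t, hm, h0, h1, hpieces⟩ := (hG g hg).2.2
  obtain ⟨i, hi1, hi2⟩ := fin_find_right hm h0 h1 hc.1.1 hc1
  obtain ⟨α, β, haff⟩ := hpieces i
  set d := t i.succ with hd
  have hd1 : d ≤ 1 := by
    have := hm.monotone (Fin.le_last (i.succ)); rw [h1] at this; exact this
  have hc0 : 0 ≤ c := hc.1.1
  set cX : XX := ⟨c, hc.1⟩ with hcX
  have hfixc : g cX = cX := FixR_fix hc hg rfl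
  have hgc : α * c + β = c := by
    have h := haff cX ⟨hi1, hi2.le⟩
    rw [hfixc] at h
    have : (cX:ℝ) = c := rfl
    rw [this] at h
    linarith
  set m := (c + d)/2 with hm2
  have hcm : c < m := by rw [hm2]; linarith
  have hmd : m < d := by rw [hm2]; linarith
  set mX : XX := ⟨m, le_trans hc0 hcm.le, le_trans hmd.le hd1⟩ with hmX
  have hgm := haff mX ⟨le_trans hi1 hcm.le, hmd.le⟩
  have hlt : g cX < g mX := (smono_of hG hg) (coe_lt.mpr hcm)
  have hαpos : 0 < α := by
    have h2 : (↑(g cX):ℝ) < ↑(g mX) := coe_lt.mp hlt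
    rw [hfixc, hgm] at h2
    have hcc : (cX:ℝ) = c := rfl
    have hmm : (mX:ℝ) = m := rfl
    rw [hcc, hmm] at h2
    nlinarith
  refine ⟨α, hαpos, (d - c)/2, by linarith, fun y hy1 hy2 => ?_⟩
  have hyp : (y:ℝ) ∈ Icc (t i.castSucc) d := ⟨le_trans hi1 hy1, by linarith⟩
  rw [haff y hyp]
  ring_nf
  nlinarith [hgc]

lemma exists_AffGL (hG : ∀ g ∈ G, Nice g) {g : PP} (hg : g ∈ G) {c : ℝ}
    (hc : c ∈ FixR G) (hc0 : 0 < c) : ∃ σ : ℝ, AffGL c g σ := by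
  obtain ⟨n, t, hm, h0, h1, hpieces⟩ := (hG g hg).2.2
  obtain ⟨i, hi1, hi2⟩ := fin_find_left hm h0 h1 hc0 hc.1.2
  obtain ⟨α, β, haff⟩ := hpieces i
  set e := t i.castSucc with hdef
  have he0 : 0 ≤ e := by
    have := hm.monotone (Fin.zero_le (i.castSucc)); rw [h0] at this; exact this
  have hc1 : c ≤ 1 := hc.1.2
  set cX : XX := ⟨c, hc.1⟩ with hcX
  have hfixc : g cX = cX := FixR_fix hc hg rfl
  have hgc : α * c + β = c := by
    have h := haff cX ⟨hi1.le, hi2⟩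
    rw [hfixc] at h
    have : (cX:ℝ) = c := rfl
    rw [this] at h
    linarith
  set m := (e + c)/2 with hm2
  have hem : e < m := by rw [hm2]; linarith
  have hmc : m < c := by rw [hm2]; linarith
  set mX : XX := ⟨m, le_trans he0 hem.le, le_trans hmc.le hc1⟩ with hmX
  have hgm := haff mX ⟨hem.le, le_trans hmc.le hi2⟩
  have hlt : g mX < g cX := (smono_of hG hg) (coe_lt.mpr hmc)
  have hαpos : 0 < α := by
    have h2 : (↑(g mX):ℝ) < ↑(g cX) := coe_lt.mp hlt
    rw [hfixc, hgm] at h2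
    have hcc : (cX:ℝ) = c := rfl
    have hmm : (mX:ℝ) = m := rfl
    rw [hcc, hmm] at h2
    nlinarith
  refine ⟨α, hαpos, (c - e)/2, by linarith, fun y hy1 hy2 => ?_⟩
  have hyp : (y:ℝ) ∈ Icc e (t i.succ) := ⟨by linarith, le_trans hy2 hi2⟩
  rw [haff y hyp]
  ring_nf
  nlinarith [hgc]

lemma commSub_le (G : Subgroup PP) : ⁅G,G⁆ ≤ G := by
  rw [Subgroup.commutator_le]
  intro g hg h hh
  rw [commutatorElement_def]
  exact mul_mem (mul_mem (mul_mem hg hh) (inv_mem hg)) (inv_mem hh)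

def TrivR (c : ℝ) (f : PP) : Prop := ∃ ε > 0, ∀ y : XX, c ≤ (y:ℝ) → (y:ℝ) ≤ c + ε → f y = y
def TrivL (c : ℝ) (f : PP) : Prop := ∃ ε > 0, ∀ y : XX, c - ε ≤ (y:ℝ) → (y:ℝ) ≤ c → f y = y

def trivRSub (c : ℝ) : Subgroup PP where
  carrier := {f | TrivR c f}
  one_mem' := ⟨1, one_pos, fun y _ _ => rfl⟩
  mul_mem' := by
    rintro f f' ⟨ε, hε, hf⟩ ⟨ε', hε', hf'⟩
    refine ⟨min ε ε', lt_min hε hε', fun y h1 h2 => ?_⟩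
    have e1 : f' y = y := hf' y h1 (le_trans h2 (by simp [min_le_right]))
    rw [Equiv.Perm.mul_apply, e1]
    exact hf y h1 (le_trans h2 (by simp [min_le_left]))
  inv_mem' := by
    rintro f ⟨ε, hε, hf⟩
    refine ⟨ε, hε, fun y h1 h2 => ?_⟩
    have e1 : f y = y := hf y h1 h2
    calc f⁻¹ y = f⁻¹ (f y) := by rw [e1]
    _ = y := Equiv.Perm.inv_apply_self f y

def trivLSub (c : ℝ) : Subgroup PP where
  carrier := {f | TrivL c f}
  one_mem' := ⟨1, one_pos, fun y _ _ => rfl⟩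
  mul_mem' := by
    rintro f f' ⟨ε, hε, hf⟩ ⟨ε', hε', hf'⟩
    refine ⟨min ε ε', lt_min hε hε', fun y h1 h2 => ?_⟩
    have e1 : f' y = y := hf' y (le_trans (by have := min_le_right ε ε'; linarith) h1) h2
    rw [Equiv.Perm.mul_apply, e1]
    exact hf y (le_trans (by have := min_le_left ε ε'; linarith) h1) h2
  inv_mem' := by
    rintro f ⟨ε, hε, hf⟩
    refine ⟨ε, hε, fun y h1 h2 => ?_⟩
    have e1 : f y = y := hf y h1 h2
    calc f⁻¹ y = f⁻¹ (f y) := by rw [e1]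
    _ = y := Equiv.Perm.inv_apply_self f y

lemma AffG.triv {c : ℝ} {f : PP} (h : AffG c f 1) : TrivR c f := by
  obtain ⟨_, ε, hε, hf⟩ := h
  exact ⟨ε, hε, fun y h1 h2 => Subtype.ext (by rw [hf y h1 h2]; ring)⟩

lemma AffGL.triv {c : ℝ} {f : PP} (h : AffGL c f 1) : TrivL c f := by
  obtain ⟨_, ε, hε, hf⟩ := h
  exact ⟨ε, hε, fun y h1 h2 => Subtype.ext (by rw [hf y h1 h2]; ring)⟩

lemma comm_trivR (hG : ∀ g ∈ G, Nice g) {c : ℝ} (hc : c ∈ FixR G) (hc1 : c < 1)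
    {g h : PP} (hg : g ∈ G) (hh : h ∈ G) : TrivR c ⁅g,h⁆ := by
  obtain ⟨σ1, hσ1⟩ := exists_AffG hG hg hc hc1
  obtain ⟨σ2, hσ2⟩ := exists_AffG hG hh hc hc1
  obtain ⟨σ3, hσ3⟩ := exists_AffG hG (inv_mem hg) hc hc1
  obtain ⟨σ4, hσ4⟩ := exists_AffG hG (inv_mem hh) hc hc1
  have h13 : σ1 * σ3 = 1 := by
    have hA : AffG c (g * g⁻¹) (σ1*σ3) := hσ1.mul hσ3
    rw [mul_inv_cancel] at hA
    exact AffG.unique hc.1.1 hc1 hA AffG.one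
  have h24 : σ2 * σ4 = 1 := by
    have hA : AffG c (h * h⁻¹) (σ2*σ4) := hσ2.mul hσ4
    rw [mul_inv_cancel] at hA
    exact AffG.unique hc.1.1 hc1 hA AffG.one
  have hcomm : AffG c ⁅g,h⁆ (σ1*σ2*σ3*σ4) := by
    rw [commutatorElement_def]
    exact ((hσ1.mul hσ2).mul hσ3).mul hσ4
  have hone : σ1*σ2*σ3*σ4 = 1 := by
    have : σ1*σ2*σ3*σ4 = (σ1*σ3)*(σ2*σ4) := by ring
    rw [this, h13, h24, one_mul]
  rw [hone] at hcomm
  exact hcomm.triv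

lemma comm_trivL (hG : ∀ g ∈ G, Nice g) {c : ℝ} (hc : c ∈ FixR G) (hc0 : 0 < c)
    {g h : PP} (hg : g ∈ G) (hh : h ∈ G) : TrivL c ⁅g,h⁆ := by
  obtain ⟨σ1, hσ1⟩ := exists_AffGL hG hg hc hc0
  obtain ⟨σ2, hσ2⟩ := exists_AffGL hG hh hc hc0
  obtain ⟨σ3, hσ3⟩ := exists_AffGL hG (inv_mem hg) hc hc0
  obtain ⟨σ4, hσ4⟩ := exists_AffGL hG (inv_mem hh) hc hc0
  have h13 : σ1 * σ3 = 1 := by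
    have hA : AffGL c (g * g⁻¹) (σ1*σ3) := hσ1.mul hσ3
    rw [mul_inv_cancel] at hA
    exact AffGL.unique hc0 hc.1.2 hA AffGL.one
  have h24 : σ2 * σ4 = 1 := by
    have hA : AffGL c (h * h⁻¹) (σ2*σ4) := hσ2.mul hσ4
    rw [mul_inv_cancel] at hA
    exact AffGL.unique hc0 hc.1.2 hA AffGL.one
  have hcomm : AffGL c ⁅g,h⁆ (σ1*σ2*σ3*σ4) := by
    rw [commutatorElement_def]
    exact ((hσ1.mul hσ2).mul hσ3).mul hσ4
  have hone : σ1*σ2*σ3*σ4 = 1 := by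
    have : σ1*σ2*σ3*σ4 = (σ1*σ3)*(σ2*σ4) := by ring
    rw [this, h13, h24, one_mul]
  rw [hone] at hcomm
  exact hcomm.triv

lemma G1_trivR (hG : ∀ g ∈ G, Nice g) {c : ℝ} (hc : c ∈ FixR G) (hc1 : c < 1)
    {f : PP} (hf : f ∈ ⁅G,G⁆) : TrivR c f := by
  have hle : ⁅G,G⁆ ≤ trivRSub c := by
    rw [Subgroup.commutator_le]
    intro g hg h hh
    exact comm_trivR hG hc hc1 hg hh
  exact hle hf

lemma G1_trivL (hG : ∀ g ∈ G, Nice g) {c : ℝ} (hc : c ∈ FixR G) (hc0 : 0 < c)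
    {f : PP} (hf : f ∈ ⁅G,G⁆) : TrivL c f := by
  have hle : ⁅G,G⁆ ≤ trivLSub c := by
    rw [Subgroup.commutator_le]
    intro g hg h hh
    exact comm_trivL hG hc hc0 hg hh
  exact hle hf

/-- elements of the commutator subgroup are trivial near the ends of each orbital -/
lemma orb_end_triv (hG : ∀ g ∈ G, Nice g) {a b : ℝ} (horb : IsOrb G a b)
    {f : PP} (hf : f ∈ ⁅G,G⁆) :
    ∃ ε > 0, ∀ y : XX, ((a < (y:ℝ) ∧ (y:ℝ) ≤ a + ε) ∨ (b - ε ≤ (y:ℝ) ∧ (y:ℝ) < b)) → f y = y := by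
  have ha1 : a < 1 := lt_of_lt_of_le horb.2.2.1 horb.2.1.1.2
  have hb0 : 0 < b := lt_of_le_of_lt horb.1.1.1 horb.2.2.1
  obtain ⟨ε1, hε1, hR⟩ := G1_trivR hG horb.1 ha1 hf
  obtain ⟨ε2, hε2, hL⟩ := G1_trivL hG horb.2.1 hb0 hf
  refine ⟨min ε1 ε2, lt_min hε1 hε2, fun y hy => ?_⟩
  rcases hy with ⟨h1, h2⟩ | ⟨h1, h2⟩
  · exact hR y h1.le (le_trans h2 (by have := min_le_left ε1 ε2; linarith))
  · exact hL y (le_trans (by have := min_le_right ε1 ε2; linarith) h1) h2.le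

lemma orb_inv (hG : ∀ g ∈ G, Nice g) {g : PP} (hg : g ∈ G) {aa bb : ℝ}
    (ha : aa ∈ FixR G) (hb : bb ∈ FixR G) {y : XX} (h1 : aa < (y:ℝ)) (h2 : (y:ℝ) < bb) :
    aa < ((g y : XX):ℝ) ∧ ((g y : XX):ℝ) < bb := by
  have haX : g ⟨aa, ha.1⟩ = ⟨aa, ha.1⟩ := FixR_fix ha hg rfl
  have hbX : g ⟨bb, hb.1⟩ = ⟨bb, hb.1⟩ := FixR_fix hb hg rfl
  constructor
  · have h3 := (smono_of hG hg) (show (⟨aa,ha.1⟩:XX) < y from coe_lt.mpr h1)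
    rw [haX] at h3
    exact coe_lt.mp h3
  · have h3 := (smono_of hG hg) (show y < (⟨bb,hb.1⟩:XX) from coe_lt.mpr h2)
    rw [hbX] at h3
    exact coe_lt.mp h3

lemma moved_of_notFix {s : ℝ} (hs : s ∈ Icc (0:ℝ) 1) (h : s ∉ FixR G) :
    ∃ g ∈ G, g ⟨s,hs⟩ ≠ ⟨s,hs⟩ := by
  by_contra hcon
  push_neg at hcon
  refine h ⟨hs, fun g hg y hy => ?_⟩
  rw [show y = (⟨s,hs⟩:XX) from Subtype.ext hy]
  exact hcon g hg

lemma mover_exists (hG : ∀ g ∈ G, Nice g)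
    (hsupp : {x : XX | ∃ g ∈ ⁅G,G⁆, g x ≠ x} = {x : XX | ∃ g ∈ G, g x ≠ x})
    {a b : ℝ} (horb : IsOrb G a b) {p q : ℝ} (hap : a < p) (hpq : p ≤ q) (hqb : q < b)
    (hp : p ∈ Icc (0:ℝ) 1) :
    ∃ h ∈ ⁅G,G⁆, q < ((h (⟨p, hp⟩ : XX) : XX) : ℝ) := by
  by_contra hcon
  push_neg at hcon
  set pX : XX := ⟨p, hp⟩ with hpX
  set S : Set ℝ := {z | ∃ h ∈ ⁅G,G⁆, z = ((h pX : XX):ℝ)} with hSdef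
  have hpS : p ∈ S := ⟨1, one_mem _, rfl⟩
  have hSne : S.Nonempty := ⟨p, hpS⟩
  have hSq : ∀ z ∈ S, z ≤ q := by
    rintro z ⟨h, hh, rfl⟩
    exact hcon h hh
  have hSbdd : BddAbove S := ⟨q, hSq⟩
  set s := sSup S with hs
  have hps : p ≤ s := le_csSup hSbdd hpS
  have hsq : s ≤ q := csSup_le hSne hSq
  have hs01 : s ∈ Icc (0:ℝ) 1 := ⟨le_trans hp.1 hps, le_trans hsq (le_trans hqb.le horb.2.1.1.2)⟩
  have has : a < s := lt_of_lt_of_le hap hps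
  have hsb : s < b := lt_of_le_of_lt hsq hqb
  have hsnf : s ∉ FixR G := horb.notFix has hsb
  obtain ⟨g0, hg0, hg0m⟩ := moved_of_notFix hs01 hsnf
  set sX : XX := ⟨s, hs01⟩ with hsX
  have hmoved : ∃ h ∈ ⁅G,G⁆, sX < h sX := by
    have hmem : sX ∈ {x : XX | ∃ g ∈ ⁅G,G⁆, g x ≠ x} := by
      rw [hsupp]; exact ⟨g0, hg0, hg0m⟩
    obtain ⟨h0, hh0, hh0m⟩ := hmem
    rcases lt_or_gt_of_ne hh0m with hlt | hgt
    · refine ⟨h0⁻¹, inv_mem hh0, ?_⟩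
      have := (smono_of hG (commSub_le G (inv_mem hh0))) hlt
      rwa [Equiv.Perm.inv_apply_self] at this
    · exact ⟨h0, hh0, hgt⟩
  obtain ⟨h0, hh0, hh0gt⟩ := hmoved
  set r : ℝ := ((h0 sX : XX):ℝ) with hr
  have hsr : s < r := coe_lt.mp hh0gt
  have hcont : Continuous (fun y : XX => ((h0 y : XX):ℝ)) :=
    continuous_subtype_val.comp (hG h0 (commSub_le G hh0)).1
  obtain ⟨δ, hδ, hball⟩ := Metric.continuous_iff.mp hcont sX (r - s) (by linarith)
  obtain ⟨z, hzS, hzgt⟩ := exists_lt_of_lt_csSup hSne (show s - δ < sSup S by rw [← hs]; linarith)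
  have hzle : z ≤ s := le_csSup hSbdd hzS
  obtain ⟨h1, hh1, hzeq⟩ := hzS
  have hdist : dist (h1 pX) sX < δ := by
    rw [Subtype.dist_eq, Real.dist_eq]
    rw [← hzeq]
    rw [abs_lt]
    constructor <;> [linarith; linarith]
  have hbig := hball (h1 pX) hdist
  rw [Real.dist_eq, abs_lt] at hbig
  have hgts : s < ((h0 (h1 pX) : XX):ℝ) := by
    have : ((h0 (h1 pX) : XX):ℝ) - r > -(r - s) := hbig.1
    linarith
  have hmemS : ((h0 (h1 pX) : XX):ℝ) ∈ S := by
    refine ⟨h0 * h1, mul_mem hh0 hh1, ?_⟩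
    rw [Equiv.Perm.mul_apply]
  have := le_csSup hSbdd hmemS
  rw [← hs] at this
  linarith

structure OC (G : Subgroup PP) where
  a : ℝ
  b : ℝ
  p : ℝ
  q : ℝ
  horb : IsOrb G a b
  hap : a < p
  hpq : p ≤ q
  hqb : q < b

lemma OC.p_mem (oc : OC G) : oc.p ∈ Icc (0:ℝ) 1 :=
  ⟨le_trans oc.horb.1.1.1 oc.hap.le,
   le_trans (le_trans oc.hpq oc.hqb.le) oc.horb.2.1.1.2⟩

lemma OC.q_mem (oc : OC G) : oc.q ∈ Icc (0:ℝ) 1 :=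
  ⟨le_trans oc.p_mem.1 oc.hpq, le_trans oc.hqb.le oc.horb.2.1.1.2⟩

def OC.pX (oc : OC G) : XX := ⟨oc.p, oc.p_mem⟩
def OC.qX (oc : OC G) : XX := ⟨oc.q, oc.q_mem⟩

def MovR (w : PP) (oc : OC G) : Prop := oc.q < ((w oc.pX : XX):ℝ)
def MovL (w : PP) (oc : OC G) : Prop := ((w oc.qX : XX):ℝ) < oc.p
def Mov (w : PP) (oc : OC G) : Prop := MovR w oc ∨ MovL w oc

lemma Mov.inv (hG : ∀ g ∈ G, Nice g) {w : PP} (hw : w ∈ G) {oc : OC G}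
    (h : Mov w oc) : Mov w⁻¹ oc := by
  have hsm : StrictMono (⇑w⁻¹) := smono_of hG (inv_mem hw)
  rcases h with h | h
  · right
    have h2 : oc.qX < w oc.pX := by
      rw [coe_lt]; exact h
    have := hsm h2
    rw [Equiv.Perm.inv_apply_self] at this
    exact coe_lt.mp this
  · left
    have h2 : w oc.qX < oc.pX := by
      rw [coe_lt]; exact h
    have := hsm h2
    rw [Equiv.Perm.inv_apply_self] at this
    exact coe_lt.mp this

noncomputable def enl (hG : ∀ g ∈ G, Nice g) {g : PP} (hg : g ∈ ⁅G,G⁆) (oc : OC G) : OC G where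
  a := oc.a
  b := oc.b
  p := min oc.p (oc.a + (orb_end_triv hG oc.horb hg).choose)
  q := max oc.q (oc.b - (orb_end_triv hG oc.horb hg).choose)
  horb := oc.horb
  hap := lt_min oc.hap (by have := (orb_end_triv hG oc.horb hg).choose_spec.1; linarith)
  hpq := le_trans (min_le_left _ _) (le_trans oc.hpq (le_max_left _ _))
  hqb := max_lt oc.hqb (by have := (orb_end_triv hG oc.horb hg).choose_spec.1; linarith)

lemma enl_spec (hG : ∀ g ∈ G, Nice g) {g : PP} (hg : g ∈ ⁅G,G⁆) (oc : OC G) :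
    (enl hG hg oc).p ≤ oc.p ∧ oc.q ≤ (enl hG hg oc).q ∧
    ∀ y : XX, oc.p ≤ (y:ℝ) → (y:ℝ) ≤ oc.q →
      (enl hG hg oc).p ≤ ((g y : XX):ℝ) ∧ ((g y : XX):ℝ) ≤ (enl hG hg oc).q := by
  set ε := (orb_end_triv hG oc.horb hg).choose with hε
  obtain ⟨hεpos, hP⟩ := (orb_end_triv hG oc.horb hg).choose_spec
  have hmono : Monotone (⇑g) := (hG g (commSub_le G hg)).2.1
  refine ⟨min_le_left _ _, le_max_left _ _, fun y hy1 hy2 => ?_⟩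
  have hu01 : min oc.p (oc.a + ε) ∈ Icc (0:ℝ) 1 :=
    ⟨le_min oc.p_mem.1 (by have := oc.horb.1.1.1; linarith), le_trans (min_le_left _ _) oc.p_mem.2⟩
  have hv01 : max oc.q (oc.b - ε) ∈ Icc (0:ℝ) 1 :=
    ⟨le_trans oc.q_mem.1 (le_max_left _ _),
     max_le oc.q_mem.2 (by have := oc.horb.2.1.1.2; linarith)⟩
  set uX : XX := ⟨min oc.p (oc.a + ε), hu01⟩ with huX
  set vX : XX := ⟨max oc.q (oc.b - ε), hv01⟩ with hvX
  have hfixu : g uX = uX := by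
    apply hP uX
    left
    constructor
    · exact lt_min oc.hap (by linarith)
    · exact min_le_right _ _
  have hfixv : g vX = vX := by
    apply hP vX
    right
    constructor
    · exact le_max_right _ _
    · exact max_lt oc.hqb (by linarith)
  constructor
  · have h3 : uX ≤ y := by rw [coe_le]; exact le_trans (min_le_left _ _) hy1
    have := hmono h3
    rw [hfixu] at this
    exact this
  · have h3 : y ≤ vX := by rw [coe_le]; exact le_trans hy2 (le_max_left _ _)
    have := hmono h3
    rw [hfixv] at this
    exact this

lemma movers_exist (hG : ∀ g ∈ G, Nice g)
    (hsupp : {x : XX | ∃ g ∈ ⁅G,G⁆, g x ≠ x} = {x : XX | ∃ g ∈ G, g x ≠ x}) :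
    ∀ (n : ℕ) (L : List (OC G)), L.length ≤ n → ∃ w ∈ ⁅G,G⁆, ∀ oc ∈ L, Mov w oc := by
  intro n
  induction n with
  | zero =>
    intro L hL
    have : L = [] := List.eq_nil_of_length_eq_zero (Nat.le_zero.mp hL)
    subst this
    exact ⟨1, one_mem _, fun oc h => absurd h List.not_mem_nil⟩
  | succ n IH =>
    intro L hL
    cases L with
    | nil => exact ⟨1, one_mem _, fun oc h => absurd h List.not_mem_nil⟩
    | cons oc T =>
      obtain ⟨g, hgmem, hgmov⟩ :=
        mover_exists hG hsupp oc.horb oc.hap oc.hpq oc.hqb oc.p_mem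
      set T' := T.map (enl hG hgmem) with hT'
      have hlen : T'.length ≤ n := by
        rw [hT', List.length_map]
        have := hL
        simp only [List.length_cons] at this
        omega
      obtain ⟨h, hhmem, hhmov⟩ := IH T' hlen
      have hmonog : Monotone (⇑g) := (hG g (commSub_le G hgmem)).2.1
      -- choose h' with h' qX ≥ qX on oc
      obtain ⟨h', hh'mem, hh'q, hh'mov⟩ :
          ∃ h' ∈ ⁅G,G⁆, oc.q ≤ ((h' oc.qX : XX):ℝ) ∧ ∀ oc' ∈ T', Mov h' oc' := by
        by_cases hcase : oc.q ≤ ((h oc.qX : XX):ℝ)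
        · exact ⟨h, hhmem, hcase, hhmov⟩
        · refine ⟨h⁻¹, inv_mem hhmem, ?_, fun oc' hoc' => Mov.inv hG (commSub_le G hhmem) (hhmov oc' hoc')⟩
          push_neg at hcase
          have h2 : h oc.qX < oc.qX := coe_lt.mpr hcase
          have := (smono_of hG (commSub_le G (inv_mem hhmem))) h2
          rw [Equiv.Perm.inv_apply_self] at this
          exact (coe_lt.mp this).le
      have hsmh' : StrictMono (⇑h') := smono_of hG (commSub_le G hh'mem)
      have hmonoh' : Monotone (⇑h') := hsmh'.monotone
      refine ⟨h' * g, mul_mem hh'mem hgmem, fun oc0 hoc0 => ?_⟩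
      rcases List.mem_cons.mp hoc0 with heq | hmemT
      · subst heq
        left
        show oc0.q < (((h' * g) oc0.pX : XX):ℝ)
        rw [Equiv.Perm.mul_apply]
        have h2 : oc0.qX < g oc0.pX := coe_lt.mpr hgmov
        have h3 := hsmh' h2
        have h4 : oc0.q ≤ ((h' oc0.qX : XX):ℝ) := hh'q
        have h5 : ((h' oc0.qX : XX):ℝ) < ((h' (g oc0.pX) : XX):ℝ) := coe_lt.mp h3
        linarith
      · set oc' := enl hG hgmem oc0 with hoc'
        have hoc'T' : oc' ∈ T' := by
          rw [hT']
          exact List.mem_map_of_mem hmemT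
        obtain ⟨hp'le, hqle', hmap⟩ := enl_spec hG hgmem oc0
        rcases hh'mov oc' hoc'T' with hR | hL2
        · left
          show oc0.q < (((h' * g) oc0.pX : XX):ℝ)
          rw [Equiv.Perm.mul_apply]
          have hmapp := hmap oc0.pX (le_refl _) oc0.hpq
          have h2 : oc'.pX ≤ g oc0.pX := by rw [coe_le]; exact hmapp.1
          have h3 := hmonoh' h2
          have h4 : ((h' oc'.pX : XX):ℝ) ≤ ((h' (g oc0.pX) : XX):ℝ) := h3
          have h5 : oc'.q < ((h' oc'.pX : XX):ℝ) := hR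
          have h6 : oc0.q ≤ oc'.q := hqle'
          linarith
        · right
          show (((h' * g) oc0.qX : XX):ℝ) < oc0.p
          rw [Equiv.Perm.mul_apply]
          have hmapq := hmap oc0.qX oc0.hpq (le_refl _)
          have h2 : g oc0.qX ≤ oc'.qX := by rw [coe_le]; exact hmapq.2
          have h3 := hmonoh' h2
          have h4 : ((h' (g oc0.qX) : XX):ℝ) ≤ ((h' oc'.qX : XX):ℝ) := h3
          have h5 : ((h' oc'.qX : XX):ℝ) < oc'.p := hL2
          have h6 : oc'.p ≤ oc0.p := hp'le
          linarith

def MovedF (F : List PP) : Set XX := {y : XX | ∃ f ∈ F, f y ≠ y}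

lemma list_end_triv (hG : ∀ g ∈ G, Nice g) {F : List PP} (hF : ∀ f ∈ F, f ∈ ⁅G,G⁆)
    {a b : ℝ} (horb : IsOrb G a b) :
    ∃ ε > 0, 2*ε < b - a ∧ ∀ f ∈ F, ∀ y : XX,
      ((a < (y:ℝ) ∧ (y:ℝ) ≤ a + ε) ∨ (b - ε ≤ (y:ℝ) ∧ (y:ℝ) < b)) → f y = y := by
  induction F with
  | nil =>
    refine ⟨(b-a)/3, by have := horb.2.2.1; linarith, by have := horb.2.2.1; linarith,
      fun f hf => absurd hf List.not_mem_nil⟩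
  | cons f F IH =>
    have hF' : ∀ f' ∈ F, f' ∈ ⁅G,G⁆ := fun f' hf' => hF f' (List.mem_cons_of_mem f hf')
    obtain ⟨ε1, hε1, hlt1, hfix1⟩ := IH hF'
    obtain ⟨ε2, hε2, hfix2⟩ := orb_end_triv hG horb (hF f (List.mem_cons_self))
    refine ⟨min ε1 ε2, lt_min hε1 hε2, ?_, ?_⟩
    · have := min_le_left ε1 ε2; linarith
    · intro f' hf' y hy
      rcases List.mem_cons.mp hf' with heq | hmem
      · subst heq
        apply hfix2 y
        rcases hy with ⟨h1, h2⟩ | ⟨h1, h2⟩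
        · exact Or.inl ⟨h1, le_trans h2 (by have := min_le_right ε1 ε2; linarith)⟩
        · exact Or.inr ⟨le_trans (by have := min_le_right ε1 ε2; linarith) h1, h2⟩
      · apply hfix1 f' hmem y
        rcases hy with ⟨h1, h2⟩ | ⟨h1, h2⟩
        · exact Or.inl ⟨h1, le_trans h2 (by have := min_le_left ε1 ε2; linarith)⟩
        · exact Or.inr ⟨le_trans (by have := min_le_left ε1 ε2; linarith) h1, h2⟩

lemma breakpoints (hG : ∀ g ∈ G, Nice g) {f : PP} (hf : f ∈ ⁅G,G⁆) :
    ∃ Tf : Finset ℝ, ∀ a b : ℝ, IsOrb G a b → (∀ τ ∈ Tf, τ ∉ Ioo a b) →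
      ∀ y : XX, a < (y:ℝ) → (y:ℝ) < b → f y = y := by
  classical
  obtain ⟨n, t, hm, h0, h1, hp⟩ := (hG f (commSub_le G hf)).2.2
  refine ⟨Finset.image t Finset.univ, fun a b horb hno y hy1 hy2 => ?_⟩
  have hab : a < b := horb.2.2.1
  have ha0 : 0 ≤ a := horb.1.1.1
  have hb1 : b ≤ 1 := horb.2.1.1.2
  -- find the piece whose left endpoint is ≤ a, maximal
  set S : Finset (Fin (n+1)) := Finset.univ.filter (fun j => t j.castSucc ≤ a) with hS
  have hSne : S.Nonempty := by
    refine ⟨0, ?_⟩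
    simp only [hS, Finset.mem_filter, Finset.mem_univ, true_and]
    have : (0 : Fin (n+1)).castSucc = (0 : Fin (n+2)) := rfl
    rw [this, h0]; exact ha0
  set i := S.max' hSne with hi
  have hiS : i ∈ S := S.max'_mem hSne
  have hile : t i.castSucc ≤ a := by
    simp only [hS, Finset.mem_filter] at hiS; exact hiS.2
  have hsucc_gt : a < t i.succ := by
    by_contra hcon
    push_neg at hcon
    by_cases hlast : i = Fin.last n
    · rw [hlast] at hcon
      have hls : (Fin.last n).succ = Fin.last (n+1) := rfl
      rw [hls, h1] at hcon
      linarith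
    · have hkey : ((i+1 : Fin (n+1))).castSucc = i.succ := by
        apply Fin.ext
        simp only [Fin.coe_castSucc, Fin.val_succ]
        rw [Fin.val_add_one]; simp [hlast]
      have hmem : (i+1 : Fin (n+1)) ∈ S := by
        simp only [hS, Finset.mem_filter, Finset.mem_univ, true_and]
        rw [hkey]; exact hcon
      have hle := S.le_max' _ hmem
      rw [← hi] at hle
      have : i < i + 1 := by
        rw [Fin.lt_iff_val_lt_val]
        have : ((i+1 : Fin (n+1)) : ℕ) = (i:ℕ) + 1 := by
          rw [Fin.val_add_one]; simp [hlast]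
        rw [this]; omega
      exact absurd hle (not_le.mpr this)
  have hsucc_ge : b ≤ t i.succ := by
    have hnotin := hno (t i.succ) (Finset.mem_image_of_mem t (Finset.mem_univ _))
    rcases le_or_gt b (t i.succ) with h | h
    · exact h
    · exact absurd ⟨hsucc_gt, h⟩ hnotin
  obtain ⟨α, β, haff⟩ := hp i
  have ha1 : a < 1 := lt_of_lt_of_le hab hb1
  obtain ⟨ε0, hε0, hfix⟩ := G1_trivR hG horb.1 ha1 hf
  set δ := min ε0 (b - a) / 2 with hδ
  have hδpos : 0 < δ := by
    rw [hδ]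
    have h1' : 0 < min ε0 (b-a) := lt_min hε0 (by linarith)
    linarith
  have hδε : δ < ε0 := by
    rw [hδ]; have := min_le_left ε0 (b-a); linarith
  have hδb : δ < b - a := by
    rw [hδ]; have := min_le_right ε0 (b-a); linarith
  have hz1m : a + δ ∈ Icc (0:ℝ) 1 := ⟨by linarith, by linarith⟩
  have hz2m : a + δ/2 ∈ Icc (0:ℝ) 1 := ⟨by linarith, by linarith⟩
  set z1 : XX := ⟨a + δ, hz1m⟩ with hz1
  set z2 : XX := ⟨a + δ/2, hz2m⟩ with hz2
  have hfix1 : f z1 = z1 := hfix z1 (by simp [hz1]; linarith) (by simp [hz1]; linarith)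
  have hfix2 : f z2 = z2 := hfix z2 (by simp [hz2]; linarith) (by simp [hz2]; linarith)
  have hpm1 : ((z1:ℝ)) ∈ Icc (t i.castSucc) (t i.succ) := by
    constructor
    · simp only [hz1]; linarith
    · simp only [hz1]; linarith
  have hpm2 : ((z2:ℝ)) ∈ Icc (t i.castSucc) (t i.succ) := by
    constructor
    · simp only [hz2]; linarith
    · simp only [hz2]; linarith
  have he1 := haff z1 hpm1
  have he2 := haff z2 hpm2
  rw [hfix1] at he1
  rw [hfix2] at he2
  have hc1 : (z1:ℝ) = a + δ := rfl
  have hc2 : (z2:ℝ) = a + δ/2 := rfl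
  rw [hc1] at he1
  rw [hc2] at he2
  have hαone : α = 1 := by
    have hd : α * ((a+δ) - (a+δ/2)) = ((a+δ) - (a+δ/2)) := by ring_nf; ring_nf at he1 he2; linarith
    have hne : ((a+δ) - (a+δ/2)) ≠ 0 := by simp; linarith
    have := mul_right_cancel₀ hne (by linarith [hd] : α * ((a+δ) - (a+δ/2)) = 1 * ((a+δ) - (a+δ/2)))
    exact this
  have hβzero : β = 0 := by
    rw [hαone] at he1
    linarith
  have hym : ((y:ℝ)) ∈ Icc (t i.castSucc) (t i.succ) := ⟨by linarith, by linarith⟩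
  have := haff y hym
  rw [hαone, hβzero] at this
  apply Subtype.ext
  rw [this]; ring

lemma breakpointsL (hG : ∀ g ∈ G, Nice g) {F : List PP} (hF : ∀ f ∈ F, f ∈ ⁅G,G⁆) :
    ∃ T : Finset ℝ, ∀ a b : ℝ, IsOrb G a b → (∀ τ ∈ T, τ ∉ Ioo a b) →
      ∀ f ∈ F, ∀ y : XX, a < (y:ℝ) → (y:ℝ) < b → f y = y := by
  classical
  induction F with
  | nil => exact ⟨∅, fun a b _ _ f hf => absurd hf List.not_mem_nil⟩
  | cons f F IH =>
    obtain ⟨T1, hT1⟩ := IH (fun f' hf' => hF f' (List.mem_cons_of_mem f hf'))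
    obtain ⟨T2, hT2⟩ := breakpoints hG (hF f (List.mem_cons_self))
    refine ⟨T1 ∪ T2, fun a b horb hno f' hf' y hy1 hy2 => ?_⟩
    rcases List.mem_cons.mp hf' with heq | hmem
    · subst heq
      exact hT2 a b horb (fun τ hτ => hno τ (Finset.mem_union_right _ hτ)) y hy1 hy2
    · exact hT1 a b horb (fun τ hτ => hno τ (Finset.mem_union_left _ hτ)) f' hmem y hy1 hy2

def ORBS (G : Subgroup PP) (F : List PP) : Set (ℝ × ℝ) :=
  {ab | IsOrb G ab.1 ab.2 ∧ ∃ y : XX, (ab.1 < (y:ℝ) ∧ (y:ℝ) < ab.2) ∧ y ∈ MovedF F}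

lemma ORBS_finite (hG : ∀ g ∈ G, Nice g) {F : List PP} (hF : ∀ f ∈ F, f ∈ ⁅G,G⁆) :
    (ORBS G F).Finite := by
  classical
  obtain ⟨T, hT⟩ := breakpointsL hG hF
  have hsub : ORBS G F ⊆ ⋃ τ ∈ (T : Set ℝ), {ab : ℝ×ℝ | IsOrb G ab.1 ab.2 ∧ τ ∈ Ioo ab.1 ab.2} := by
    rintro ⟨a, b⟩ ⟨horb, y, ⟨hy1, hy2⟩, f, hfF, hfy⟩
    have : ∃ τ ∈ T, τ ∈ Ioo a b := by
      by_contra hcon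
      push_neg at hcon
      exact hfy (hT a b horb hcon f hfF y hy1 hy2)
    obtain ⟨τ, hτT, hτab⟩ := this
    exact Set.mem_biUnion hτT ⟨horb, hτab⟩
  refine Set.Finite.subset ?_ hsub
  refine Set.Finite.biUnion T.finite_toSet (fun τ _ => ?_)
  apply Set.Subsingleton.finite
  rintro ⟨a, b⟩ ⟨horb, hτ⟩ ⟨a', b'⟩ ⟨horb', hτ'⟩
  obtain ⟨he1, he2⟩ := IsOrb.unique horb horb' hτ.1 hτ.2 hτ'.1 hτ'.2
  exact Prod.ext he1 he2

noncomputable def mkOC (hG : ∀ g ∈ G, Nice g) {F : List PP} (hF : ∀ f ∈ F, f ∈ ⁅G,G⁆)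
    (ab : ℝ × ℝ) (hab : ab ∈ ORBS G F) : OC G where
  a := ab.1
  b := ab.2
  p := ab.1 + (list_end_triv hG hF hab.1).choose
  q := ab.2 - (list_end_triv hG hF hab.1).choose
  horb := hab.1
  hap := by have := (list_end_triv hG hF hab.1).choose_spec.1; linarith
  hpq := by have := (list_end_triv hG hF hab.1).choose_spec.2.1; linarith
  hqb := by have := (list_end_triv hG hF hab.1).choose_spec.1; linarith

lemma mkOC_sat (hG : ∀ g ∈ G, Nice g) {F : List PP} (hF : ∀ f ∈ F, f ∈ ⁅G,G⁆)
    (ab : ℝ × ℝ) (hab : ab ∈ ORBS G F) :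
    ∀ y : XX, ab.1 < (y:ℝ) → (y:ℝ) < ab.2 → y ∈ MovedF F →
      (mkOC hG hF ab hab).p ≤ (y:ℝ) ∧ (y:ℝ) ≤ (mkOC hG hF ab hab).q := by
  intro y hy1 hy2 hymov
  obtain ⟨f, hfF, hfy⟩ := hymov
  obtain ⟨hεpos, hεlt, hfix⟩ := (list_end_triv hG hF hab.1).choose_spec
  constructor
  · by_contra hcon
    push_neg at hcon
    exact hfy (hfix f hfF y (Or.inl ⟨hy1, by simpa [mkOC] using hcon.le⟩))
  · by_contra hcon
    push_neg at hcon
    exact hfy (hfix f hfF y (Or.inr ⟨by simpa [mkOC] using hcon.le, hy2⟩))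

lemma main_move (hG : ∀ g ∈ G, Nice g)
    (hsupp : {x : XX | ∃ g ∈ ⁅G,G⁆, g x ≠ x} = {x : XX | ∃ g ∈ G, g x ≠ x})
    (F : List PP) (hF : ∀ f ∈ F, f ∈ ⁅G,G⁆) :
    ∃ w ∈ ⁅G,G⁆, ∀ y : XX, y ∈ MovedF F → w y ∉ MovedF F := by
  classical
  have hfin := ORBS_finite hG hF
  set L : List (OC G) :=
    hfin.toFinset.attach.toList.map
      (fun x => mkOC hG hF x.1 (hfin.mem_toFinset.mp x.2)) with hL
  obtain ⟨w, hwmem, hwmov⟩ := movers_exist hG hsupp L.length L (le_refl _)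
  refine ⟨w, hwmem, fun y hymov hwymov => ?_⟩
  obtain ⟨f, hfF, hfy⟩ := hymov
  have hyG : ∃ g ∈ G, g y ≠ y := ⟨f, commSub_le G (hF f hfF), hfy⟩
  obtain ⟨a, b, horb, hy1, hy2⟩ := exists_orbital hG hyG
  have habO : (a, b) ∈ ORBS G F := ⟨horb, y, ⟨hy1, hy2⟩, f, hfF, hfy⟩
  set oc := mkOC hG hF (a,b) habO with hocdef
  have hocL : oc ∈ L := by
    rw [hL]
    refine List.mem_map.mpr ⟨⟨(a,b), hfin.mem_toFinset.mpr habO⟩, ?_, rfl⟩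
    exact Finset.mem_toList.mpr (Finset.mem_attach _ _)
  have hsat := mkOC_sat hG hF (a,b) habO
  obtain ⟨hyp, hyq⟩ := hsat y hy1 hy2 ⟨f, hfF, hfy⟩
  have hwmono : Monotone (⇑w) := (hG w (commSub_le G hwmem)).2.1
  have hwyorb := orb_inv hG (commSub_le G hwmem) horb.1 horb.2.1 hy1 hy2
  obtain ⟨hwy1, hwy2⟩ := hsat (w y) hwyorb.1 hwyorb.2 hwymov
  rcases hwmov oc hocL with hR | hL2
  · have h2 : oc.pX ≤ y := by rw [coe_le]; exact hyp
    have h3 := hwmono h2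
    have h4 : ((w oc.pX : XX):ℝ) ≤ ((w y : XX):ℝ) := h3
    have h5 : oc.q < ((w oc.pX : XX):ℝ) := hR
    linarith
  · have h2 : y ≤ oc.qX := by rw [coe_le]; exact hyq
    have h3 := hwmono h2
    have h4 : ((w y : XX):ℝ) ≤ ((w oc.qX : XX):ℝ) := h3
    have h5 : ((w oc.qX : XX):ℝ) < oc.p := hL2
    linarith

lemma fix_inv_iff (f : PP) (y : XX) : f⁻¹ y = y ↔ f y = y := by
  constructor
  · intro h
    calc f y = f (f⁻¹ y) := by rw [h]
    _ = y := Equiv.Perm.apply_inv_self f y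
  · intro h
    calc f⁻¹ y = f⁻¹ (f y) := by rw [h]
    _ = y := Equiv.Perm.inv_apply_self f y

lemma conj_fix_iff (h g : PP) (y : XX) : (h*g*h⁻¹) y = y ↔ g (h⁻¹ y) = h⁻¹ y := by
  rw [Equiv.Perm.mul_apply, Equiv.Perm.mul_apply]
  constructor
  · intro he
    have := congrArg (⇑h⁻¹) he
    rwa [Equiv.Perm.inv_apply_self] at this
  · intro he
    rw [he, Equiv.Perm.apply_inv_self]

lemma commute_of_disj {u v : PP} (h : ∀ y : XX, u y ≠ y → v y = y) : u * v = v * u := by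
  apply Equiv.ext
  intro y
  rw [Equiv.Perm.mul_apply, Equiv.Perm.mul_apply]
  by_cases hu : u y = y
  · by_cases hv : v y = y
    · rw [hv, hu, hv]
    · have huvy : u (v y) = v y := by
        by_contra hne
        exact hv (v.injective (h (v y) hne))
      rw [huvy, hu]
  · have hvy : v y = y := h y hu
    have huy : u (u y) ≠ u y := fun he => hu (u.injective he)
    have hvuy : v (u y) = u y := h (u y) huy
    rw [hvy, hvuy]

lemma comm_aux1 {Gr : Type*} [Group Gr] (f g h : Gr)
    (hc : (h*g⁻¹*h⁻¹) * f = f * (h*g⁻¹*h⁻¹)) : ⁅f, ⁅g,h⁆⁆ = ⁅f,g⁆ := by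
  have hcm : Commute (h*g⁻¹*h⁻¹) f := hc
  have key : (h*g⁻¹*h⁻¹) * f⁻¹ = f⁻¹ * (h*g⁻¹*h⁻¹) := hcm.inv_right.eq
  calc ⁅f, ⁅g,h⁆⁆ = f*g*((h*g⁻¹*h⁻¹)*f⁻¹)*((h*g*h⁻¹)*g⁻¹) := by group
  _ = f*g*(f⁻¹*(h*g⁻¹*h⁻¹))*((h*g*h⁻¹)*g⁻¹) := by rw [key]
  _ = ⁅f,g⁆ := by group

lemma comm_aux2 {Gr : Type*} [Group Gr] (f k c : Gr)
    (hc : (k*f⁻¹*k⁻¹) * c = c * (k*f⁻¹*k⁻¹)) : ⁅⁅f,k⁆, c⁆ = ⁅f,c⁆ := by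
  calc ⁅⁅f,k⁆, c⁆ = f*((k*f⁻¹*k⁻¹)*c)*((k*f*k⁻¹)*(f⁻¹*c⁻¹)) := by group
  _ = f*(c*(k*f⁻¹*k⁻¹))*((k*f*k⁻¹)*(f⁻¹*c⁻¹)) := by rw [hc]
  _ = ⁅f,c⁆ := by group

lemma not_moved_fix {F : List PP} {y : XX} (hy : y ∉ MovedF F) {f : PP} (hf : f ∈ F) :
    f y = y := by
  by_contra hne
  exact hy ⟨f, hf, hne⟩
end S3

open S3
open scoped commutatorElement

theorem stmt3
    (G : Subgroup (Equiv.Perm (Icc (0:ℝ) 1)))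
    (hG : ∀ g ∈ G, Continuous (⇑(g : Equiv.Perm (Icc (0:ℝ) 1))) ∧ Monotone ⇑g ∧ IsPL g)
    (hsupp : {x | ∃ g ∈ ⁅G, G⁆, g x ≠ x} = {x | ∃ g ∈ G, g x ≠ x}) :
    ⁅⁅G, G⁆, ⁅G, G⁆⁆ = ⁅⁅⁅G, G⁆, ⁅G, G⁆⁆, ⁅⁅G, G⁆, ⁅G, G⁆⁆⁆ ∧
      {x | ∃ g ∈ ⁅⁅G, G⁆, ⁅G, G⁆⁆, g x ≠ x} = {x | ∃ g ∈ G, g x ≠ x} := by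
  have hGn : ∀ g ∈ G, Nice g := hG
  have hsupp' : {x : XX | ∃ g ∈ ⁅G, G⁆, g x ≠ x} = {x : XX | ∃ g ∈ G, g x ≠ x} := hsupp
  constructor
  · apply le_antisymm
    · -- G'' ≤ G'''
      rw [Subgroup.commutator_le]
      intro f hf g hg
      obtain ⟨h, hhmem, hhmov⟩ := main_move hGn hsupp' [f, g]
        (by rintro f' hf'
            rcases List.mem_cons.mp hf' with rfl | hf''
            · exact hf
            · rcases List.mem_singleton.mp hf'' with rfl
              exact hg)
      have hfh : h*f*h⁻¹ ∈ ⁅G,G⁆ := mul_mem (mul_mem hhmem hf) (inv_mem hhmem)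
      have hgh : h*g*h⁻¹ ∈ ⁅G,G⁆ := mul_mem (mul_mem hhmem hg) (inv_mem hhmem)
      obtain ⟨k, hkmem, hkmov⟩ := main_move hGn hsupp' [f, g, h*f*h⁻¹, h*g*h⁻¹]
        (by rintro f' hf'
            rcases List.mem_cons.mp hf' with rfl | hf''
            · exact hf
            rcases List.mem_cons.mp hf'' with rfl | hf''
            · exact hg
            rcases List.mem_cons.mp hf'' with rfl | hf''
            · exact hfh
            rcases List.mem_singleton.mp hf'' with rfl
            exact hgh)
      have hid1 : ⁅f, ⁅g,h⁆⁆ = ⁅f,g⁆ := by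
        apply comm_aux1
        apply commute_of_disj
        intro y hy
        -- y moved by h g⁻¹ h⁻¹, so h⁻¹ y moved by g, so y=h(h⁻¹ y) not moved by F
        have h1 : g⁻¹ (h⁻¹ y) ≠ h⁻¹ y := fun he => hy ((conj_fix_iff h g⁻¹ y).mpr he)
        have h2 : g (h⁻¹ y) ≠ h⁻¹ y := fun he => h1 ((fix_inv_iff g (h⁻¹ y)).mpr he)
        have h3 : (h⁻¹ y) ∈ MovedF [f, g] :=
          ⟨g, List.mem_cons_of_mem f (List.mem_singleton.mpr rfl), h2⟩
        have h4 := hhmov (h⁻¹ y) h3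
        rw [Equiv.Perm.apply_inv_self] at h4
        exact not_moved_fix h4 (List.mem_cons_self)
      have hid2 : ⁅⁅f,k⁆, ⁅g,h⁆⁆ = ⁅f,⁅g,h⁆⁆ := by
        apply comm_aux2
        apply commute_of_disj
        intro y hy
        have h1 : f⁻¹ (k⁻¹ y) ≠ k⁻¹ y := fun he => hy ((conj_fix_iff k f⁻¹ y).mpr he)
        have h2 : f (k⁻¹ y) ≠ k⁻¹ y := fun he => h1 ((fix_inv_iff f (k⁻¹ y)).mpr he)
        have h3 : (k⁻¹ y) ∈ MovedF [f, g, h*f*h⁻¹, h*g*h⁻¹] :=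
          ⟨f, List.mem_cons_self, h2⟩
        have h4 := hkmov (k⁻¹ y) h3
        rw [Equiv.Perm.apply_inv_self] at h4
        -- y is not moved by g nor by h g h⁻¹, hence fixed by ⁅g,h⁆
        have hgy : g y = y :=
          not_moved_fix h4 (List.mem_cons_of_mem _ (List.mem_cons_self))
        have hconj : (h*g*h⁻¹) y = y :=
          not_moved_fix h4 (List.mem_cons_of_mem _ (List.mem_cons_of_mem _
            (List.mem_cons_of_mem _ (List.mem_singleton.mpr rfl))))
        have e1 : g (h⁻¹ y) = h⁻¹ y := (conj_fix_iff h g y).mp hconj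
        have e2 : g⁻¹ (h⁻¹ y) = h⁻¹ y := (fix_inv_iff g (h⁻¹ y)).mpr e1
        rw [commutatorElement_def, Equiv.Perm.mul_apply, Equiv.Perm.mul_apply,
          Equiv.Perm.mul_apply, e2, Equiv.Perm.apply_inv_self, hgy]
      have hmem : ⁅⁅f,k⁆, ⁅g,h⁆⁆ ∈ ⁅⁅⁅G,G⁆,⁅G,G⁆⁆, ⁅⁅G,G⁆,⁅G,G⁆⁆⁆ :=
        Subgroup.commutator_mem_commutator
          (Subgroup.commutator_mem_commutator hf hkmem)
          (Subgroup.commutator_mem_commutator hg hhmem)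
      rw [hid2, hid1] at hmem
      exact hmem
    · exact commSub_le _
  · ext x
    simp only [Set.mem_setOf_eq]
    constructor
    · rintro ⟨g, hg, hgx⟩
      exact ⟨g, commSub_le G (commSub_le ⁅G,G⁆ hg), hgx⟩
    · intro hx
      have hx1 : x ∈ {x : XX | ∃ g ∈ ⁅G,G⁆, g x ≠ x} := by rw [hsupp']; exact hx
      obtain ⟨f, hf, hfx⟩ := hx1
      obtain ⟨w, hw, hwmov⟩ := main_move hGn hsupp' [f]
        (by rintro f' hf'
            rcases List.mem_singleton.mp hf' with rfl
            exact hf)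
      refine ⟨⁅f,w⁆, Subgroup.commutator_mem_commutator hf hw, ?_⟩
      have hkey : f⁻¹ (w⁻¹ x) = w⁻¹ x := by
        by_contra hne
        have h2 : f (w⁻¹ x) ≠ w⁻¹ x := fun he => hne ((fix_inv_iff f (w⁻¹ x)).mpr he)
        have h3 : (w⁻¹ x) ∈ MovedF [f] := ⟨f, List.mem_singleton.mpr rfl, h2⟩
        have h4 := hwmov (w⁻¹ x) h3
        rw [Equiv.Perm.apply_inv_self] at h4
        exact hfx (not_moved_fix h4 (List.mem_singleton.mpr rfl))
      rw [commutatorElement_def, Equiv.Perm.mul_apply, Equiv.Perm.mul_apply,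
        Equiv.Perm.mul_apply, hkey, Equiv.Perm.apply_inv_self]
      exact hfx
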